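/- arXiv:1805.00387 — 5 statements merged into one kernel-verified Lean document; each statement's English description precedes it below -/
import Mathlib

section
/- For b, β > 0 and a constant K > 0, the equation W + b = 2b/(1 + e^{-4bβW}) in the variable W ∈ (-b, b), equivalently K·(P - P*) + b = 2b/(1 + e^{-4bβK(P - P*)}), has W = 0 as its unique solution in (-b, b) if and only if 2b²β ≤ 1; if 2b²β > 1 it has exactly three solutions W^L < 0 < W^H in (-b, b). -/
open Set

noncomputable def psiAux (b β W : ℝ) : ℝ :=
  Real.log (b + W) - Real.log (b - W) - 4*b*β*W

lemma psiAux_zero (b β : ℝ) : psiAux b β 0 = 0 := by simp [psiAux]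

lemma psiAux_neg (b β W : ℝ) : psiAux b β (-W) = -psiAux b β W := by
  unfold psiAux
  rw [show b + -W = b - W from by ring, show b - -W = b + W from by ring]
  ring

lemma psiAux_hasDerivAt (b β : ℝ) (hb : 0 < b) {W : ℝ} (h1 : -b < W) (h2 : W < b) :
    HasDerivAt (psiAux b β) (1/(b+W) + 1/(b-W) - 4*b*β) W := by
  have h3 : 0 < b + W := by linarith
  have h4 : 0 < b - W := by linarith
  have d1 : HasDerivAt (fun x : ℝ => Real.log (b + x)) (1/(b+W)) W := by
    have := ((hasDerivAt_id W).const_add b).log h3.ne'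
    simpa using this
  have d2 : HasDerivAt (fun x : ℝ => Real.log (b - x)) (-1/(b-W)) W := by
    have := ((hasDerivAt_id W).const_sub b).log h4.ne'
    simpa using this
  have d3 : HasDerivAt (fun x : ℝ => 4*b*β*x) (4*b*β) W := by
    simpa using (hasDerivAt_id W).const_mul (4*b*β)
  have := (d1.sub d2).sub d3
  exact this.congr_deriv (by ring)

lemma psiAux_mem_iff (b β : ℝ) (hb : 0 < b) {W : ℝ} (h1 : -b < W) (h2 : W < b) :
    W + b = 2*b/(1 + Real.exp (-(4*b*β*W))) ↔ psiAux b β W = 0 := by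
  have h3 : 0 < b + W := by linarith
  have h4 : 0 < b - W := by linarith
  have hE : 0 < Real.exp (-(4*b*β*W)) := Real.exp_pos _
  have hD : 0 < 1 + Real.exp (-(4*b*β*W)) := by linarith
  rw [eq_div_iff hD.ne']
  have step1 : (W + b) * (1 + Real.exp (-(4*b*β*W))) = 2*b ↔
      Real.exp (-(4*b*β*W)) = (b - W)/(b + W) := by
    rw [eq_div_iff h3.ne']
    constructor <;> intro h <;> nlinarith
  rw [step1]
  rw [show (b - W)/(b + W) = Real.exp (Real.log ((b-W)/(b+W))) from
    (Real.exp_log (by positivity)).symm, Real.exp_eq_exp]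
  rw [Real.log_div h4.ne' h3.ne']
  unfold psiAux
  constructor <;> intro h <;> linarith

set_option maxHeartbeats 1000000 in
theorem pitchfork_solutions (b β : ℝ) (hb : 0 < b) (hβ : 0 < β) :
    (({W : ℝ | W ∈ Ioo (-b) b ∧ W + b = 2 * b / (1 + Real.exp (-(4 * b * β * W)))}
        = {0}) ↔ 2 * b ^ 2 * β ≤ 1) ∧
    (2 * b ^ 2 * β > 1 →
      ∃ WL WH : ℝ, WL < 0 ∧ 0 < WH ∧
        {W : ℝ | W ∈ Ioo (-b) b ∧ W + b = 2 * b / (1 + Real.exp (-(4 * b * β * W)))}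
          = {WL, 0, WH}) := by
  have hmem : ∀ W : ℝ,
      (W ∈ Ioo (-b) b ∧ W + b = 2 * b / (1 + Real.exp (-(4 * b * β * W)))) ↔
      (W ∈ Ioo (-b) b ∧ psiAux b β W = 0) := by
    intro W
    constructor
    · rintro ⟨hI, he⟩
      exact ⟨hI, (psiAux_mem_iff b β hb hI.1 hI.2).mp he⟩
    · rintro ⟨hI, he⟩
      exact ⟨hI, (psiAux_mem_iff b β hb hI.1 hI.2).mpr he⟩
  have hderivAt : ∀ x ∈ Ioo (-b) b, deriv (psiAux b β) x = 1/(b+x) + 1/(b-x) - 4*b*β :=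
    fun x hx => (psiAux_hasDerivAt b β hb hx.1 hx.2).deriv
  have hcont : ContinuousOn (psiAux b β) (Ioo (-b) b) :=
    fun x hx => ((psiAux_hasDerivAt b β hb hx.1 hx.2).continuousAt).continuousWithinAt
  have key : 2 * b ^ 2 * β > 1 →
      ∃ WL WH : ℝ, WL < 0 ∧ 0 < WH ∧
        {W : ℝ | W ∈ Ioo (-b) b ∧ W + b = 2 * b / (1 + Real.exp (-(4 * b * β * W)))}
          = {WL, 0, WH} := by
    intro hgt
    obtain ⟨r, hrdef⟩ : ∃ r : ℝ, r = Real.sqrt (b^2 - 1/(2*β)) := ⟨_, rfl⟩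
    have hhalf : 0 < 1/(2*β) := by positivity
    have hr2pos : 0 < b^2 - 1/(2*β) := by
      rw [sub_pos, div_lt_iff₀ (by positivity : (0:ℝ) < 2*β)]
      nlinarith
    have hrpos : 0 < r := hrdef ▸ Real.sqrt_pos.mpr hr2pos
    have hrsq : r^2 = b^2 - 1/(2*β) := hrdef ▸ Real.sq_sqrt hr2pos.le
    have hrb : r < b := by
      apply lt_of_pow_lt_pow_left₀ 2 hb.le
      rw [hrsq]; linarith
    -- strictly decreasing on [0, r]
    have anti : StrictAntiOn (psiAux b β) (Icc 0 r) := by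
      apply strictAntiOn_of_deriv_neg (convex_Icc 0 r)
        (hcont.mono (fun x hx => ⟨by linarith [hx.1], lt_of_le_of_lt hx.2 hrb⟩))
      intro x hx
      rw [interior_Icc] at hx
      have hx1 : 0 < x := hx.1
      have hxb : x < b := hx.2.trans hrb
      rw [hderivAt x ⟨by linarith, hxb⟩]
      have h3 : 0 < b + x := by linarith
      have h4 : 0 < b - x := by linarith
      have hq : 1/(b+x) + 1/(b-x) = 2*b/((b+x)*(b-x)) := by field_simp; ring
      rw [hq, sub_neg, div_lt_iff₀ (by positivity)]
      have hx2sq : x^2 < r^2 := by nlinarith [hx.2]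
      have h5 : 1/(2*β) < b^2 - x^2 := by rw [hrsq] at hx2sq; linarith
      have h6 : 1 < (b^2 - x^2) * (2*β) := (div_lt_iff₀ (by positivity : (0:ℝ) < 2*β)).mp h5
      nlinarith [mul_lt_mul_of_pos_left h6 hb]
    -- strictly increasing on [r, b)
    have mono2 : StrictMonoOn (psiAux b β) (Ico r b) := by
      apply strictMonoOn_of_deriv_pos (convex_Ico r b)
        (hcont.mono (fun x hx => ⟨by linarith [hx.1, hrpos], hx.2⟩))
      intro x hx
      rw [interior_Ico] at hx
      have hx1 : 0 < x := hrpos.trans hx.1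
      have hxb : x < b := hx.2
      rw [hderivAt x ⟨by linarith, hxb⟩]
      have h3 : 0 < b + x := by linarith
      have h4 : 0 < b - x := by linarith
      have hq : 1/(b+x) + 1/(b-x) = 2*b/((b+x)*(b-x)) := by field_simp; ring
      rw [hq, sub_pos, lt_div_iff₀ (by positivity)]
      have hx2sq : r^2 < x^2 := by nlinarith [hx.1, hrpos]
      have h5 : b^2 - x^2 < 1/(2*β) := by rw [hrsq] at hx2sq; linarith
      have h6 : (b^2 - x^2) * (2*β) < 1 :=
        (lt_div_iff₀ (by positivity : (0:ℝ) < 2*β)).mp h5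
      nlinarith [mul_lt_mul_of_pos_left h6 hb]
    have hψr : psiAux b β r < 0 := by
      have := anti (left_mem_Icc.mpr hrpos.le) (right_mem_Icc.mpr hrpos.le) hrpos
      rw [psiAux_zero] at this
      linarith
    -- point near b where psi is positive
    obtain ⟨s, hsdef⟩ : ∃ s : ℝ, s = b - b/2 * Real.exp (-(4*b*β*b)) := ⟨_, rfl⟩
    have hexp1 : Real.exp (-(4*b*β*b)) < 1 := Real.exp_lt_one_iff.mpr (by nlinarith)
    have hexp0 : 0 < Real.exp (-(4*b*β*b)) := Real.exp_pos _
    have hs0 : b/2 < s := by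
      rw [hsdef]; nlinarith
    have hsb : s < b := by
      rw [hsdef]; nlinarith
    have hspos : 0 < s := lt_trans (by linarith) hs0
    have hbs : b - s = b/2 * Real.exp (-(4*b*β*b)) := by rw [hsdef]; ring
    have hψs : 0 < psiAux b β s := by
      unfold psiAux
      rw [hbs, Real.log_mul (by positivity) hexp0.ne', Real.log_exp]
      have l1 : Real.log (b/2) < Real.log (b + s) :=
        Real.log_lt_log (by positivity) (by linarith)
      have l2 : 4*b*β*s < 4*b*β*b := by nlinarith
      linarith
    have hrs : r < s := by
      by_contra hc
      push_neg at hc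
      have := anti (left_mem_Icc.mpr hrpos.le) ⟨hspos.le, hc⟩ hspos
      rw [psiAux_zero] at this
      linarith
    have hsub : Icc r s ⊆ Ioo (-b) b :=
      fun x hx => ⟨by linarith [hx.1, hrpos], lt_of_le_of_lt hx.2 hsb⟩
    obtain ⟨WH, hWHI, hWH0⟩ := intermediate_value_Icc hrs.le (hcont.mono hsub)
      (⟨hψr.le, hψs.le⟩ : (0:ℝ) ∈ Icc (psiAux b β r) (psiAux b β s))
    have hWHpos : 0 < WH := lt_of_lt_of_le hrpos hWHI.1
    have hWHb : WH < b := lt_of_le_of_lt hWHI.2 hsb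
    have uniq : ∀ p, 0 < p → p < b → psiAux b β p = 0 → p = WH := by
      intro p hp0 hpb hp
      have hpr : r < p := by
        by_contra hc
        push_neg at hc
        have := anti (left_mem_Icc.mpr hrpos.le) ⟨hp0.le, hc⟩ hp0
        rw [psiAux_zero, hp] at this
        linarith
      exact mono2.injOn ⟨hpr.le, hpb⟩ ⟨hWHI.1, hWHb⟩ (by rw [hp, hWH0])
    refine ⟨-WH, WH, by linarith, hWHpos, ?_⟩
    ext W
    simp only [mem_setOf_eq, mem_insert_iff, mem_singleton_iff]
    rw [hmem W]
    constructor
    · rintro ⟨hI, hψ⟩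
      rcases lt_trichotomy W 0 with hlt | heq | hgt
      · left
        have hnW : psiAux b β (-W) = 0 := by rw [psiAux_neg]; linarith
        have := uniq (-W) (by linarith) (by linarith [hI.1]) hnW
        linarith
      · right; left; exact heq
      · right; right; exact uniq W hgt hI.2 hψ
    · rintro (rfl | rfl | rfl)
      · refine ⟨⟨by linarith, by linarith⟩, ?_⟩
        rw [psiAux_neg, hWH0, neg_zero]
      · exact ⟨⟨by linarith, hb⟩, psiAux_zero b β⟩
      · exact ⟨⟨by linarith, hWHb⟩, hWH0⟩
  refine ⟨⟨?_, ?_⟩, key⟩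
  · -- set = {0} → 2b²β ≤ 1
    intro hset
    by_contra hc
    push_neg at hc
    obtain ⟨WL, WH, hWL, hWH, hEq⟩ := key hc
    have : WH ∈ ({0} : Set ℝ) := by
      rw [← hset, hEq]
      simp
    rw [mem_singleton_iff] at this
    linarith
  · -- 2b²β ≤ 1 → set = {0}
    intro hle
    have mono : StrictMonoOn (psiAux b β) (Ico 0 b) := by
      apply strictMonoOn_of_deriv_pos (convex_Ico 0 b)
        (hcont.mono (fun x hx => ⟨by linarith [hx.1], hx.2⟩))
      intro x hx
      rw [interior_Ico] at hx
      have hx1 : 0 < x := hx.1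
      have hxb : x < b := hx.2
      rw [hderivAt x ⟨by linarith, hxb⟩]
      have h3 : 0 < b + x := by linarith
      have h4 : 0 < b - x := by linarith
      have hq : 1/(b+x) + 1/(b-x) = 2*b/((b+x)*(b-x)) := by field_simp; ring
      rw [hq, sub_pos, lt_div_iff₀ (by positivity)]
      nlinarith [mul_pos (mul_pos hb hβ) (mul_pos hx1 hx1),
        mul_le_mul_of_nonneg_left hle (by positivity : (0:ℝ) ≤ 2*b)]
    ext W
    simp only [mem_setOf_eq, mem_singleton_iff]
    rw [hmem W]
    constructor
    · rintro ⟨hI, hψ⟩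
      rcases lt_trichotomy W 0 with hlt | heq | hgt
      · exfalso
        have hnW : psiAux b β (-W) = 0 := by rw [psiAux_neg]; linarith
        have hm1 : (0:ℝ) ∈ Ico 0 b := ⟨le_refl 0, hb⟩
        have hm2 : -W ∈ Ico 0 b := ⟨by linarith, by linarith [hI.1]⟩
        have := mono hm1 hm2 (by linarith : (0:ℝ) < -W)
        rw [psiAux_zero] at this
        linarith
      · exact heq
      · exfalso
        have hm1 : (0:ℝ) ∈ Ico 0 b := ⟨le_refl 0, hb⟩
        have hm2 : W ∈ Ico 0 b := ⟨hgt.le, hI.2⟩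
        have := mono hm1 hm2 hgt
        rw [psiAux_zero] at this
        linarith
    · rintro rfl
      exact ⟨⟨by linarith, hb⟩, psiAux_zero b β⟩
end

section
/- For fixed b > 0, the positive solution W^H(β) ∈ (0, b) of e^{-4bβW} = (b - W)/(b + W) is strictly increasing in β on (1/(2b²), +∞), and W^H(β) → b as β → +∞. -/
open Set Filter

private lemma WH_aux_conv (b : ℝ) (hb : 0 < b) :
    StrictConvexOn ℝ (Ico 0 b) (fun t => Real.log (b + t) - Real.log (b - t)) := by
  apply StrictMonoOn.strictConvexOn_of_deriv (convex_Ico 0 b)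
  · apply ContinuousOn.sub
    · apply ContinuousOn.log (by fun_prop)
      intro t ht
      have : 0 ≤ t := ht.1
      positivity
    · apply ContinuousOn.log (by fun_prop)
      intro t ht
      have : t < b := ht.2
      have : 0 < b - t := by linarith
      exact ne_of_gt this
  · rw [interior_Ico]
    have hd : ∀ t ∈ Ioo (0:ℝ) b,
        deriv (fun t => Real.log (b + t) - Real.log (b - t)) t = 1/(b+t) + 1/(b-t) := by
      intro t ht
      have h1 : 0 < b + t := by linarith [ht.1]
      have h2 : 0 < b - t := by linarith [ht.2]
      have d1 : HasDerivAt (fun s : ℝ => Real.log (b + s)) (1 / (b + t)) t := by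
        have : HasDerivAt (fun s : ℝ => b + s) 1 t := (hasDerivAt_id t).const_add b
        simpa using this.log (ne_of_gt h1)
      have d2 : HasDerivAt (fun s : ℝ => Real.log (b - s)) ((-1) / (b - t)) t := by
        have : HasDerivAt (fun s : ℝ => b - s) (-1) t := (hasDerivAt_id t).const_sub b
        simpa using this.log (ne_of_gt h2)
      have := (d1.sub d2).deriv
      rw [show (fun t => Real.log (b + t) - Real.log (b - t)) = ((fun s => Real.log (b + s)) - fun s => Real.log (b - s)) from rfl, this]; ring
    intro u hu v hv huv
    rw [hd u hu, hd v hv]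
    have h1 : 0 < b + u := by linarith [hu.1]
    have h2 : 0 < b - u := by linarith [hu.2]
    have h3 : 0 < b + v := by linarith [hv.1]
    have h4 : 0 < b - v := by linarith [hv.2]
    have hu0 : 0 < u := hu.1
    rw [div_add_div _ _ (ne_of_gt h1) (ne_of_gt h2), div_add_div _ _ (ne_of_gt h3) (ne_of_gt h4)]
    rw [div_lt_div_iff₀ (by positivity) (by positivity)]
    nlinarith [mul_pos hb (mul_pos (sub_pos.mpr huv) (show (0:ℝ) < v + u by linarith))]

private lemma WH_aux_slope (b : ℝ) (hb : 0 < b) {x y : ℝ} (hx : 0 < x) (hxy : x < y)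
    (hy : y < b) :
    y * (Real.log (b + x) - Real.log (b - x)) < x * (Real.log (b + y) - Real.log (b - y)) := by
  have hconv := WH_aux_conv b hb
  have h0 : (0:ℝ) ∈ Ico (0:ℝ) b := ⟨le_refl _, hb⟩
  have hym : y ∈ Ico (0:ℝ) b := ⟨by linarith, hy⟩
  have hy0 : 0 < y := lt_trans hx hxy
  have key := hconv.2 h0 hym (show (0:ℝ) ≠ y from ne_of_lt hy0)
    (show (0:ℝ) < 1 - x/y by rw [sub_pos, div_lt_one hy0]; exact hxy)
    (show (0:ℝ) < x/y by positivity)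
    (show (1 - x/y) + x/y = 1 by ring)
  simp only [smul_eq_mul, mul_zero, zero_add] at key
  have hxe : x / y * y = x := div_mul_cancel₀ x (ne_of_gt hy0)
  rw [hxe] at key
  have hlog0 : Real.log (b + 0) - Real.log (b - 0) = 0 := by simp
  rw [hlog0, mul_zero, zero_add] at key
  have := (mul_lt_mul_iff_right₀ hy0).mpr key
  calc y * (Real.log (b + x) - Real.log (b - x))
      < y * (x / y * (Real.log (b + y) - Real.log (b - y))) := this
    _ = x * (Real.log (b + y) - Real.log (b - y)) := by
        field_simp

theorem WH_monotone_in_beta (b : ℝ) (hb : 0 < b) (WH : ℝ → ℝ)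
    (hWH : ∀ β : ℝ, 1 / (2 * b ^ 2) < β →
      WH β ∈ Ioo 0 b ∧
      Real.exp (-(4 * b * β * WH β)) = (b - WH β) / (b + WH β)) :
    StrictMonoOn WH (Ioi (1 / (2 * b ^ 2))) ∧
    Tendsto WH atTop (nhds b) := by
  -- The key reformulation: 4 b β W = log(b+W) - log(b-W)
  have hkey : ∀ β : ℝ, 1 / (2 * b ^ 2) < β →
      4 * b * β * WH β = Real.log (b + WH β) - Real.log (b - WH β) := by
    intro β hβ
    obtain ⟨⟨hW0, hWb⟩, heq⟩ := hWH β hβ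
    have h1 : 0 < b + WH β := by linarith
    have h2 : 0 < b - WH β := by linarith
    have := congrArg Real.log heq
    rw [Real.log_exp, Real.log_div (ne_of_gt h2) (ne_of_gt h1),
      ] at this
    linarith [this]
  have hmono : StrictMonoOn WH (Ioi (1 / (2 * b ^ 2))) := by
    intro β₁ hβ₁ β₂ hβ₂ h12
    simp only [mem_Ioi] at hβ₁ hβ₂
    obtain ⟨⟨hW10, hW1b⟩, _⟩ := hWH β₁ hβ₁
    obtain ⟨⟨hW20, hW2b⟩, _⟩ := hWH β₂ hβ₂
    have hk1 := hkey β₁ hβ₁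
    have hk2 := hkey β₂ hβ₂
    by_contra hle
    push_neg at hle
    rcases eq_or_lt_of_le hle with heq | hlt
    · -- WH β₂ = WH β₁ forces β₁ = β₂
      rw [heq] at hk2
      have heq2 : 4 * b * β₁ * WH β₁ = 4 * b * β₂ * WH β₁ := by rw [hk1, hk2]
      nlinarith [mul_pos (sub_pos.mpr h12) (show (0:ℝ) < 4 * b * WH β₁ by positivity)]
    · -- WH β₂ < WH β₁ : use the slope inequality
      have := WH_aux_slope b hb hW20 hlt hW1b
      rw [← hk1, ← hk2] at this
      nlinarith [mul_pos (sub_pos.mpr h12) (mul_pos hb (mul_pos hW10 hW20))]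
  refine ⟨hmono, ?_⟩
  -- Limit: squeeze between b - 2b exp(-(4 b W₀) β) and b
  set β₀ : ℝ := 1 / (2 * b ^ 2) + 1 with hβ₀def
  have hβ₀ : 1 / (2 * b ^ 2) < β₀ := by simp [hβ₀def]
  obtain ⟨⟨hW00, hW0b⟩, _⟩ := hWH β₀ hβ₀
  set W₀ : ℝ := WH β₀ with hW₀def
  have hc : 0 < 4 * b * W₀ := by positivity
  have hlim : Tendsto (fun β : ℝ => b - 2 * b * Real.exp (-(4 * b * W₀ * β))) atTop (nhds b) := by
    have h1 : Tendsto (fun β : ℝ => 4 * b * W₀ * β) atTop atTop :=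
      Tendsto.const_mul_atTop hc tendsto_id
    have h2 : Tendsto (fun β : ℝ => -(4 * b * W₀ * β)) atTop atBot :=
      tendsto_neg_atBot_iff.mpr h1
    have h3 : Tendsto (fun β : ℝ => Real.exp (-(4 * b * W₀ * β))) atTop (nhds 0) :=
      Real.tendsto_exp_atBot.comp h2
    have h4 := h3.const_mul (2 * b)
    have h5 := tendsto_const_nhds (x := b) (f := atTop (α := ℝ)) |>.sub h4
    simpa using h5
  apply tendsto_of_tendsto_of_tendsto_of_le_of_le' hlim tendsto_const_nhds
  · -- eventually lower bound
    filter_upwards [eventually_gt_atTop β₀] with β hβ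
    have hββ : 1 / (2 * b ^ 2) < β := lt_trans hβ₀ hβ
    obtain ⟨⟨hW0', hWb'⟩, heq⟩ := hWH β hββ
    have hWgt : W₀ < WH β := hmono (mem_Ioi.mpr hβ₀) (mem_Ioi.mpr hββ) hβ
    have h1 : 0 < b + WH β := by linarith
    have h2 : 0 ≤ b - WH β := by linarith
    have hβpos : 0 < β := lt_of_le_of_lt (by positivity) hββ
    -- b - WH β = (b + WH β) * exp(-(4 b β WH β)) ≤ 2b * exp(-(4 b W₀ β))
    have hbw : b - WH β = (b + WH β) * Real.exp (-(4 * b * β * WH β)) := by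
      rw [heq]; field_simp
    have hexple : Real.exp (-(4 * b * β * WH β)) ≤ Real.exp (-(4 * b * W₀ * β)) := by
      apply Real.exp_le_exp.mpr
      have : 4 * b * W₀ * β ≤ 4 * b * β * WH β := by
        nlinarith [mul_pos (mul_pos hb hβpos) (sub_pos.mpr hWgt)]
      linarith
    have hfin : b - WH β ≤ 2 * b * Real.exp (-(4 * b * W₀ * β)) := by
      rw [hbw]
      have hexp_pos : 0 < Real.exp (-(4 * b * β * WH β)) := Real.exp_pos _
      calc (b + WH β) * Real.exp (-(4 * b * β * WH β))
          ≤ (2 * b) * Real.exp (-(4 * b * β * WH β)) := by nlinarith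
        _ ≤ 2 * b * Real.exp (-(4 * b * W₀ * β)) := by nlinarith
    linarith
  · filter_upwards [eventually_gt_atTop β₀] with β hβ
    have hββ : 1 / (2 * b ^ 2) < β := lt_trans hβ₀ hβ
    exact le_of_lt (hWH β hββ).1.2
end

section
/- For fixed b > 0, the negative solution W^L(β) ∈ (-b, 0) of e^{-4bβW} = (b - W)/(b + W) is strictly decreasing in β on (1/(2b²), +∞), and W^L(β) → -b as β → +∞. -/
open Set Filter

noncomputable def gfun : ℝ → ℝ := fun t => (Real.log (1 + t) - Real.log (1 - t)) / t

lemma hasDerivAt_v {t : ℝ} (h1 : (1:ℝ) + t ≠ 0) (h2 : (1:ℝ) - t ≠ 0) :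
    HasDerivAt (fun t : ℝ => Real.log (1 + t) - Real.log (1 - t)) (2 / (1 - t ^ 2)) t := by
  have ha : HasDerivAt (fun t : ℝ => 1 + t) 1 t := by
    simpa using (hasDerivAt_id t).const_add (1:ℝ)
  have hb : HasDerivAt (fun t : ℝ => 1 - t) (-1) t := by
    simpa using (hasDerivAt_id t).const_sub (1:ℝ)
  have hA := (Real.hasDerivAt_log h1).comp t ha
  have hB := (Real.hasDerivAt_log h2).comp t hb
  have h := hA.sub hB
  refine h.congr_deriv ?_
  have h3 : (1:ℝ) - t ^ 2 = (1 + t) * (1 - t) := by ring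
  rw [h3]
  field_simp
  ring

lemma key_ineq {t : ℝ} (ht : t ∈ Ioo (0:ℝ) 1) :
    Real.log (1 + t) - Real.log (1 - t) < 2 * t / (1 - t ^ 2) := by
  set ψ : ℝ → ℝ := fun t => 2 * t / (1 - t ^ 2) - (Real.log (1 + t) - Real.log (1 - t)) with hψ
  have hder : ∀ x ∈ Ico (0:ℝ) 1, HasDerivAt ψ (4 * x ^ 2 / (1 - x ^ 2) ^ 2) x := by
    intro x hx
    have hx1 : (1:ℝ) + x ≠ 0 := by nlinarith [hx.1, hx.2]
    have hx2 : (1:ℝ) - x ≠ 0 := by nlinarith [hx.1, hx.2]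
    have hx3 : (1:ℝ) - x ^ 2 ≠ 0 := by
      have h : (1:ℝ) - x ^ 2 = (1 + x) * (1 - x) := by ring
      rw [h]; exact mul_ne_zero hx1 hx2
    have hu : HasDerivAt (fun x : ℝ => 2 * x) 2 x := by
      simpa using (hasDerivAt_id x).const_mul (2:ℝ)
    have hd : HasDerivAt (fun x : ℝ => 1 - x ^ 2) (-(2 * x)) x := by
      simpa using (hasDerivAt_pow 2 x).const_sub (1:ℝ)
    have hq := hu.div hd hx3
    have h := hq.sub (hasDerivAt_v hx1 hx2)
    refine h.congr_deriv ?_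
    have h3 : (1:ℝ) - x ^ 2 = (1 + x) * (1 - x) := by ring
    rw [h3]
    field_simp
    ring
  have hmono : StrictMonoOn ψ (Ico (0:ℝ) 1) := by
    apply strictMonoOn_of_deriv_pos (convex_Ico 0 1)
    · intro x hx
      exact (hder x hx).continuousAt.continuousWithinAt
    · intro x hx
      rw [interior_Ico] at hx
      rw [(hder x (Ioo_subset_Ico_self hx)).deriv]
      have h4 : 0 < 1 - x ^ 2 := by nlinarith [hx.1, hx.2]
      have h5 : 0 < x := hx.1
      positivity
  have h0 : ψ 0 < ψ t := hmono ⟨le_refl 0, one_pos⟩ ⟨ht.1.le, ht.2⟩ ht.1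
  have hz : ψ 0 = 0 := by simp [hψ]
  rw [hz] at h0
  simp only [hψ] at h0
  linarith

lemma gfun_strictMono : StrictMonoOn gfun (Ioo (0:ℝ) 1) := by
  have hder : ∀ x ∈ Ioo (0:ℝ) 1,
      HasDerivAt gfun ((2 / (1 - x ^ 2) * x - (Real.log (1 + x) - Real.log (1 - x)) * 1) / x ^ 2) x := by
    intro x hx
    have hx1 : (1:ℝ) + x ≠ 0 := by nlinarith [hx.1, hx.2]
    have hx2 : (1:ℝ) - x ≠ 0 := by nlinarith [hx.1, hx.2]
    exact (hasDerivAt_v hx1 hx2).div (hasDerivAt_id x) (ne_of_gt hx.1)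
  apply strictMonoOn_of_deriv_pos (convex_Ioo 0 1)
  · intro x hx
    exact (hder x hx).continuousAt.continuousWithinAt
  · intro x hx
    rw [interior_Ioo] at hx
    rw [(hder x hx).deriv]
    have hkey := key_ineq hx
    have hnum : 0 < 2 / (1 - x ^ 2) * x - (Real.log (1 + x) - Real.log (1 - x)) * 1 := by
      have h : 2 / (1 - x ^ 2) * x = 2 * x / (1 - x ^ 2) := by ring
      rw [h]
      linarith
    exact div_pos hnum (pow_pos hx.1 2)

lemma aux_extract {b β W : ℝ} (hb : 0 < b) (hW : W ∈ Ioo (-b) 0)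
    (heq : Real.exp (-(4 * b * β * W)) = (b - W) / (b + W)) :
    -W / b ∈ Ioo (0:ℝ) 1 ∧ gfun (-W / b) = 4 * b ^ 2 * β := by
  obtain ⟨hW1, hW2⟩ := hW
  set t := -W / b with htdef
  have ht0 : 0 < t := div_pos (by linarith) hb
  have ht1 : t < 1 := (div_lt_one hb).2 (by linarith)
  have hbW1 : 0 < b - W := by linarith
  have hbW2 : 0 < b + W := by linarith
  have hlog : -(4 * b * β * W) = Real.log (b - W) - Real.log (b + W) := by
    have h := congrArg Real.log heq
    rw [Real.log_exp, Real.log_div hbW1.ne' hbW2.ne'] at h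
    exact h
  have hfac1 : b - W = b * (1 + t) := by
    rw [htdef]; field_simp; ring
  have hfac2 : b + W = b * (1 - t) := by
    rw [htdef]; field_simp; ring
  have h1t : (0:ℝ) < 1 + t := by linarith
  have h2t : (0:ℝ) < 1 - t := by linarith
  have hlog2 : Real.log (b - W) - Real.log (b + W) = Real.log (1 + t) - Real.log (1 - t) := by
    rw [hfac1, hfac2, Real.log_mul hb.ne' h1t.ne', Real.log_mul hb.ne' h2t.ne']
    ring
  have hWt : -W = b * t := by rw [htdef]; field_simp
  have hkey : Real.log (1 + t) - Real.log (1 - t) = 4 * b ^ 2 * β * t := by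
    rw [← hlog2, ← hlog]
    have : -(4 * b * β * W) = 4 * b * β * (-W) := by ring
    rw [this, hWt]
    ring
  refine ⟨⟨ht0, ht1⟩, ?_⟩
  unfold gfun
  rw [hkey]
  field_simp

theorem WL_antitone_in_beta (b : ℝ) (hb : 0 < b) (WL : ℝ → ℝ)
    (hWL : ∀ β : ℝ, 1 / (2 * b ^ 2) < β →
      WL β ∈ Ioo (-b) 0 ∧
      Real.exp (-(4 * b * β * WL β)) = (b - WL β) / (b + WL β)) :
    StrictAntiOn WL (Ioi (1 / (2 * b ^ 2))) ∧
    Tendsto WL atTop (nhds (-b)) := by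
  constructor
  · intro β₁ h₁ β₂ h₂ hlt
    obtain ⟨hW₁, he₁⟩ := hWL β₁ h₁
    obtain ⟨hW₂, he₂⟩ := hWL β₂ h₂
    obtain ⟨ht₁, hg₁⟩ := aux_extract hb hW₁ he₁
    obtain ⟨ht₂, hg₂⟩ := aux_extract hb hW₂ he₂
    have hglt : gfun (-WL β₁ / b) < gfun (-WL β₂ / b) := by
      rw [hg₁, hg₂]
      have hb2 : (0:ℝ) < 4 * b ^ 2 := by positivity
      nlinarith
    have ht : -WL β₁ / b < -WL β₂ / b := (gfun_strictMono.lt_iff_lt ht₁ ht₂).1 hglt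
    have h := mul_lt_mul_of_pos_right ht hb
    rw [div_mul_cancel₀ _ hb.ne', div_mul_cancel₀ _ hb.ne'] at h
    linarith
  · rw [tendsto_order]
    constructor
    · intro a ha
      filter_upwards [eventually_gt_atTop (1 / (2 * b ^ 2))] with β hβ
      exact lt_trans ha (hWL β hβ).1.1
    · intro a ha
      rcases lt_or_ge a 0 with ha0 | ha0
      · have ht₀ : -a / b ∈ Ioo (0:ℝ) 1 :=
          ⟨div_pos (by linarith) hb, (div_lt_one hb).2 (by linarith)⟩
        filter_upwards [eventually_gt_atTop (1 / (2 * b ^ 2)),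
          eventually_gt_atTop (gfun (-a / b) / (4 * b ^ 2))] with β hβ hβ'
        obtain ⟨hW, he⟩ := hWL β hβ
        obtain ⟨ht, hg⟩ := aux_extract hb hW he
        by_contra hcon
        push_neg at hcon
        have htle : -WL β / b ≤ -a / b := by
          gcongr
          all_goals linarith
        have hle : gfun (-WL β / b) ≤ gfun (-a / b) :=
          gfun_strictMono.monotoneOn ht ht₀ htle
        rw [hg] at hle
        have h5 : gfun (-a / b) < β * (4 * b ^ 2) := (div_lt_iff₀ (by positivity)).1 hβ'
        have h6 : β * (4 * b ^ 2) = 4 * b ^ 2 * β := by ring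
        linarith
      · filter_upwards [eventually_gt_atTop (1 / (2 * b ^ 2))] with β hβ
        exact lt_of_lt_of_le (hWL β hβ).1.2 ha0
end

section
/- For 0 < b₁ < b₂ with 2b₁²β > 1 and 2b₂²β > 1, the positive solutions W^H(b₁) ∈ (0, b₁) and W^H(b₂) ∈ (0, b₂) of e^{-4bβW} = (b - W)/(b + W) satisfy W^H(b₁) < W^H(b₂). -/
open Set

noncomputable def Gfun (u : ℝ) : ℝ := Real.log (1 + u) - Real.log (1 - u)
noncomputable def mfun (u : ℝ) : ℝ := 2 * u / (1 - u ^ 2) - Gfun u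
noncomputable def Lfun (u : ℝ) : ℝ := Gfun u / u

lemma hasDerivAt_Gfun {u : ℝ} (h1 : -1 < u) (h2 : u < 1) :
    HasDerivAt Gfun (2 / (1 - u ^ 2)) u := by
  have hp : 0 < 1 + u := by linarith
  have hm : 0 < 1 - u := by linarith
  have hG1 : HasDerivAt (fun u : ℝ => Real.log (1 + u)) (1 / (1 + u)) u := by
    have := (Real.hasDerivAt_log hp.ne').comp u ((hasDerivAt_id u).const_add 1)
    simpa [Function.comp_def] using this
  have hG2 : HasDerivAt (fun u : ℝ => Real.log (1 - u)) (-(1 / (1 - u))) u := by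
    have := (Real.hasDerivAt_log hm.ne').comp u ((hasDerivAt_id u).neg.const_add 1)
    simpa [div_eq_mul_inv, Function.comp_def] using this
  have hne : (1 : ℝ) - u ^ 2 ≠ 0 := by nlinarith
  have := hG1.sub hG2
  refine this.congr_deriv ?_
  field_simp
  ring

lemma hasDerivAt_mfun {u : ℝ} (h1 : -1 < u) (h2 : u < 1) :
    HasDerivAt mfun (4 * u ^ 2 / (1 - u ^ 2) ^ 2) u := by
  have hne : (1 : ℝ) - u ^ 2 ≠ 0 := by nlinarith
  have hden : HasDerivAt (fun u : ℝ => 1 - u ^ 2) (-(2 * u)) u := by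
    simpa using ((hasDerivAt_pow 2 u).const_sub 1)
  have hnum : HasDerivAt (fun u : ℝ => 2 * u) 2 u := by
    simpa using (hasDerivAt_id u).const_mul 2
  have hfrac := hnum.div hden hne
  have := hfrac.sub (hasDerivAt_Gfun h1 h2)
  refine this.congr_deriv ?_
  field_simp
  ring

lemma mfun_pos {u : ℝ} (h1 : 0 < u) (h2 : u < 1) : 0 < mfun u := by
  have hmono : StrictMonoOn mfun (Ico (0:ℝ) 1) := by
    apply strictMonoOn_of_deriv_pos (convex_Ico 0 1)
    · intro x hx
      exact (hasDerivAt_mfun (by linarith [hx.1]) hx.2).continuousAt.continuousWithinAt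
    · intro x hx
      rw [interior_Ico] at hx
      rw [(hasDerivAt_mfun (by linarith [hx.1]) hx.2).deriv]
      have hxa : (0:ℝ) < 1 - x ^ 2 := by nlinarith [hx.1, hx.2]
      have hxb : x ≠ 0 := ne_of_gt hx.1
      positivity
  have h0 : mfun 0 = 0 := by simp [mfun, Gfun]
  have := hmono (by constructor <;> norm_num) (⟨le_of_lt h1, h2⟩) h1
  linarith [this]

lemma Lfun_strictMono : StrictMonoOn Lfun (Ioo (0:ℝ) 1) := by
  apply strictMonoOn_of_deriv_pos (convex_Ioo 0 1)
  · intro x hx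
    have hne : x ≠ 0 := ne_of_gt hx.1
    exact (((hasDerivAt_Gfun (by linarith [hx.1]) hx.2).div (hasDerivAt_id x) hne)).continuousAt.continuousWithinAt
  · intro x hx
    rw [interior_Ioo] at hx
    have hne : x ≠ 0 := ne_of_gt hx.1
    have hd : HasDerivAt Lfun ((2 / (1 - x ^ 2) * x - Gfun x * 1) / x ^ 2) x :=
      (hasDerivAt_Gfun (by linarith [hx.1]) hx.2).div (hasDerivAt_id x) hne
    rw [hd.deriv]
    have hm := mfun_pos hx.1 hx.2
    have : 2 / (1 - x ^ 2) * x - Gfun x * 1 = mfun x := by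
      simp [mfun]; ring
    rw [this]
    positivity

lemma Lfun_eq {β b W : ℝ} (hb : 0 < b) (hW : W ∈ Ioo 0 b)
    (hsol : Real.exp (-(4 * b * β * W)) = (b - W) / (b + W)) :
    Lfun (W / b) = 4 * b ^ 2 * β := by
  obtain ⟨hW0, hWb⟩ := hW
  have hbW : 0 < b - W := by linarith
  have hbW' : 0 < b + W := by linarith
  have hlog : -(4 * b * β * W) = Real.log (b - W) - Real.log (b + W) := by
    rw [← Real.log_exp (-(4 * b * β * W)), hsol, Real.log_div hbW.ne' hbW'.ne']
  have h1 : (1 : ℝ) + W / b = (b + W) / b := by field_simp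
  have h2 : (1 : ℝ) - W / b = (b - W) / b := by field_simp
  have hG : Gfun (W / b) = 4 * b * β * W := by
    unfold Gfun
    rw [h1, h2, Real.log_div hbW'.ne' hb.ne', Real.log_div hbW.ne' hb.ne']
    linarith
  unfold Lfun
  rw [hG]
  field_simp

theorem WH_monotone_in_b (β b₁ b₂ : ℝ) (hβ : 0 < β) (hb₁ : 0 < b₁) (h12 : b₁ < b₂)
    (h1 : 2 * b₁ ^ 2 * β > 1) (h2 : 2 * b₂ ^ 2 * β > 1)
    (W₁ W₂ : ℝ)
    (hW₁ : W₁ ∈ Ioo 0 b₁)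
    (hW₂ : W₂ ∈ Ioo 0 b₂)
    (hsol₁ : Real.exp (-(4 * b₁ * β * W₁)) = (b₁ - W₁) / (b₁ + W₁))
    (hsol₂ : Real.exp (-(4 * b₂ * β * W₂)) = (b₂ - W₂) / (b₂ + W₂)) :
    W₁ < W₂ := by
  have hb₂ : 0 < b₂ := lt_trans hb₁ h12
  have hu₁ : W₁ / b₁ ∈ Ioo (0:ℝ) 1 :=
    ⟨div_pos hW₁.1 hb₁, (div_lt_one hb₁).mpr hW₁.2⟩
  have hu₂ : W₂ / b₂ ∈ Ioo (0:ℝ) 1 :=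
    ⟨div_pos hW₂.1 hb₂, (div_lt_one hb₂).mpr hW₂.2⟩
  have hL₁ := Lfun_eq hb₁ hW₁ hsol₁
  have hL₂ := Lfun_eq hb₂ hW₂ hsol₂
  have hLlt : Lfun (W₁ / b₁) < Lfun (W₂ / b₂) := by
    rw [hL₁, hL₂]
    nlinarith [mul_pos (mul_pos (sub_pos.mpr h12) (show (0:ℝ) < b₁ + b₂ by linarith)) hβ]
  have hu : W₁ / b₁ < W₂ / b₂ :=
    (Lfun_strictMono.lt_iff_lt hu₁ hu₂).mp hLlt
  have := (div_lt_div_iff₀ hb₁ hb₂).mp hu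
  nlinarith [hW₁.1, hW₂.1, hW₁.2, hW₂.2]
end

section
/- Fix b > 0. For each β ∈ (0, 1/(2b²)) there exists a unique β^H(β) ∈ (1/(2b²), +∞) such that β·b² = β^H·(b² - W^H(β^H)²), where W^H(β^H) ∈ (0,b) is the unique positive solution of e^{-4bβ^H W} = (b-W)/(b+W); moreover β ↦ β^H(β) is strictly decreasing, β^H(β) → +∞ as β → 0⁺, and β^H(β) → 1/(2b²) as β → (1/(2b²))⁻. -/
open Set Filter

noncomputable def Lf (z : ℝ) : ℝ := Real.log (1 + z) - Real.log (1 - z)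

lemma Lf_hasDerivAt {z : ℝ} (h1 : -1 < z) (h2 : z < 1) :
    HasDerivAt Lf (2 / (1 - z ^ 2)) z := by
  have ha : (0:ℝ) < 1 + z := by linarith
  have hbz : (0:ℝ) < 1 - z := by linarith
  have d1 : HasDerivAt (fun x : ℝ => Real.log (1 + x)) (1 / (1 + z) * 1) z := by
    simpa [Function.comp_def] using (Real.hasDerivAt_log (ne_of_gt ha)).comp z ((hasDerivAt_id z).const_add 1)
  have d2 : HasDerivAt (fun x : ℝ => Real.log (1 - x)) (1 / (1 - z) * (-1)) z := by
    simpa [Function.comp_def] using (Real.hasDerivAt_log (ne_of_gt hbz)).comp z ((hasDerivAt_id z).const_sub 1)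
  have : HasDerivAt Lf (1 / (1 + z) * 1 - 1 / (1 - z) * (-1)) z := d1.sub d2
  convert this using 1
  have hsq : (1:ℝ) - z ^ 2 ≠ 0 := by nlinarith
  field_simp [ha.ne', hbz.ne']
  ring

lemma v_pos {z : ℝ} (hz : z ∈ Ioo (0:ℝ) 1) : 2 * z < Lf z := by
  set v : ℝ → ℝ := fun x => Lf x - 2 * x with hv
  have hderiv : ∀ x ∈ Ioo (-1:ℝ) 1, HasDerivAt v (2 / (1 - x ^ 2) - 2 * 1) x := by
    intro x hx
    exact (Lf_hasDerivAt hx.1 hx.2).sub ((hasDerivAt_id x).const_mul 2)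
  have hmono : StrictMonoOn v (Ico (0:ℝ) 1) := by
    apply strictMonoOn_of_deriv_pos (convex_Ico 0 1)
    · intro x hx
      exact (hderiv x ⟨by linarith [hx.1], hx.2⟩).continuousAt.continuousWithinAt
    · intro x hx
      rw [interior_Ico] at hx
      rw [(hderiv x ⟨by linarith [hx.1], hx.2⟩).deriv]
      have h1 : 0 < 1 - x ^ 2 := by nlinarith [hx.1, hx.2]
      rw [sub_pos, lt_div_iff₀ h1]
      nlinarith [hx.1]
  have h0 : v 0 = 0 := by simp [hv, Lf]
  have hlt := hmono ⟨le_refl 0, zero_lt_one⟩ ⟨le_of_lt hz.1, hz.2⟩ hz.1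
  rw [h0] at hlt
  simp only [hv] at hlt
  linarith

lemma u_pos {z : ℝ} (hz : z ∈ Ioo (0:ℝ) 1) : Lf z < 2 * z / (1 - z ^ 2) := by
  set u : ℝ → ℝ := fun x => 2 * x / (1 - x ^ 2) - Lf x with hu
  have hderiv : ∀ x ∈ Ioo (-1:ℝ) 1, HasDerivAt u
      ((2 * 1 * (1 - x ^ 2) - 2 * x * (0 - 2 * x ^ 1)) / (1 - x ^ 2) ^ 2 - 2 / (1 - x ^ 2)) x := by
    intro x hx
    have hsq : (1:ℝ) - x ^ 2 ≠ 0 := by nlinarith [hx.1, hx.2]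
    have d1 : HasDerivAt (fun y : ℝ => 2 * y) (2 * 1) x := (hasDerivAt_id x).const_mul 2
    have d2 : HasDerivAt (fun y : ℝ => 1 - y ^ 2) (0 - 2 * x ^ 1) x :=
      (hasDerivAt_const x 1).sub (hasDerivAt_pow 2 x)
    exact (d1.div d2 hsq).sub (Lf_hasDerivAt hx.1 hx.2)
  have hmono : StrictMonoOn u (Ico (0:ℝ) 1) := by
    apply strictMonoOn_of_deriv_pos (convex_Ico 0 1)
    · intro x hx
      exact (hderiv x ⟨by linarith [hx.1], hx.2⟩).continuousAt.continuousWithinAt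
    · intro x hx
      rw [interior_Ico] at hx
      rw [(hderiv x ⟨by linarith [hx.1], hx.2⟩).deriv]
      have h1 : 0 < 1 - x ^ 2 := by nlinarith [hx.1, hx.2]
      rw [sub_pos, div_lt_div_iff₀ h1 (by positivity)]
      nlinarith [hx.1, h1, mul_pos h1 (mul_pos hx.1 hx.1)]
  have h0 : u 0 = 0 := by simp [hu, Lf]
  have hlt := hmono ⟨le_refl 0, zero_lt_one⟩ ⟨le_of_lt hz.1, hz.2⟩ hz.1
  rw [h0] at hlt
  simp only [hu] at hlt
  linarith

noncomputable def phif (z : ℝ) : ℝ := Lf z / (4 * z)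
noncomputable def hfn (z : ℝ) : ℝ := (1 - z ^ 2) * Lf z / (4 * z)

lemma hfn_eq (z : ℝ) : hfn z = (1 - z ^ 2) * phif z := by
  unfold hfn phif; rw [mul_div_assoc]

lemma phif_hasDerivAt {z : ℝ} (hz : z ∈ Ioo (0:ℝ) 1) :
    HasDerivAt phif ((2 / (1 - z ^ 2) * (4 * z) - Lf z * (4 * 1)) / (4 * z) ^ 2) z := by
  have d2 : HasDerivAt (fun y : ℝ => 4 * y) (4 * 1) z := (hasDerivAt_id z).const_mul 4
  exact (Lf_hasDerivAt (by linarith [hz.1]) hz.2).div d2 (by simp; linarith [hz.1])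

lemma phif_mono : StrictMonoOn phif (Ioo (0:ℝ) 1) := by
  apply strictMonoOn_of_deriv_pos (convex_Ioo 0 1)
  · intro x hx
    exact (phif_hasDerivAt hx).continuousAt.continuousWithinAt
  · intro x hx
    rw [interior_Ioo] at hx
    rw [(phif_hasDerivAt hx).deriv]
    have h1 : 0 < 1 - x ^ 2 := by nlinarith [hx.1, hx.2]
    apply div_pos _ (by nlinarith [hx.1])
    have e : 2 / (1 - x ^ 2) * (4 * x) = 4 * (2 * x / (1 - x ^ 2)) := by ring
    rw [e]
    nlinarith [u_pos hx]

lemma hfn_hasDerivAt {z : ℝ} (hz : z ∈ Ioo (0:ℝ) 1) :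
    HasDerivAt hfn
      (((((0 - 2 * z ^ 1) * Lf z + (1 - z ^ 2) * (2 / (1 - z ^ 2))) * (4 * z)
        - (1 - z ^ 2) * Lf z * (4 * 1)) / ((4 * z) ^ 2))) z := by
  have dN : HasDerivAt (fun y : ℝ => (1 - y ^ 2) * Lf y)
      ((0 - 2 * z ^ 1) * Lf z + (1 - z ^ 2) * (2 / (1 - z ^ 2))) z :=
    (((hasDerivAt_const z 1).sub (hasDerivAt_pow 2 z)).mul
      (Lf_hasDerivAt (by linarith [hz.1]) hz.2))
  have d2 : HasDerivAt (fun y : ℝ => 4 * y) (4 * 1) z := (hasDerivAt_id z).const_mul 4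
  exact dN.div d2 (by simp; linarith [hz.1])

lemma hfn_anti : StrictAntiOn hfn (Ioo (0:ℝ) 1) := by
  apply strictAntiOn_of_deriv_neg (convex_Ioo 0 1)
  · intro x hx
    exact (hfn_hasDerivAt hx).continuousAt.continuousWithinAt
  · intro x hx
    rw [interior_Ioo] at hx
    rw [(hfn_hasDerivAt hx).deriv]
    have h1 : 0 < 1 - x ^ 2 := by nlinarith [hx.1, hx.2]
    apply div_neg_of_neg_of_pos _ (by nlinarith [hx.1])
    have hs : (1 - x ^ 2) * (2 / (1 - x ^ 2)) = 2 := by field_simp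
    rw [hs]
    have hL : 2 * x < Lf x := v_pos hx
    nlinarith [mul_pos (mul_pos hx.1 hx.1) (lt_trans (by nlinarith [hx.1] : (0:ℝ) < 2 * x) hL)]

lemma phif_gt_half {z : ℝ} (hz : z ∈ Ioo (0:ℝ) 1) : 1 / 2 < phif z := by
  have := v_pos hz
  unfold phif
  rw [lt_div_iff₀ (by linarith [hz.1] : (0:ℝ) < 4 * z)]
  linarith

lemma phif_lt {z : ℝ} (hz : z ∈ Ioo (0:ℝ) 1) : phif z < 1 / (2 * (1 - z ^ 2)) := by
  have hu := u_pos hz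
  have h1 : 0 < 1 - z ^ 2 := by nlinarith [hz.1, hz.2]
  unfold phif
  rw [div_lt_div_iff₀ (by linarith [hz.1] : (0:ℝ) < 4 * z) (by positivity)]
  rw [lt_div_iff₀ h1] at hu
  nlinarith [hz.1]

lemma hfn_lt_half {z : ℝ} (hz : z ∈ Ioo (0:ℝ) 1) : hfn z < 1 / 2 := by
  have h1 : 0 < 1 - z ^ 2 := by nlinarith [hz.1, hz.2]
  have := phif_lt hz
  rw [hfn_eq]
  have h2 : (1 - z ^ 2) * (1 / (2 * (1 - z ^ 2))) = 1 / 2 := by field_simp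
  calc (1 - z ^ 2) * phif z < (1 - z ^ 2) * (1 / (2 * (1 - z ^ 2))) := by
        exact mul_lt_mul_of_pos_left this h1
    _ = 1 / 2 := h2

lemma hfn_gt {z : ℝ} (hz : z ∈ Ioo (0:ℝ) 1) : (1 - z ^ 2) / 2 < hfn z := by
  have h1 : 0 < 1 - z ^ 2 := by nlinarith [hz.1, hz.2]
  rw [hfn_eq]
  have := phif_gt_half hz
  calc (1 - z ^ 2) / 2 = (1 - z ^ 2) * (1 / 2) := by ring
    _ < (1 - z ^ 2) * phif z := mul_lt_mul_of_pos_left this h1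

lemma hfn_continuousOn : ContinuousOn hfn (Ioo (0:ℝ) 1) := fun x hx =>
  (hfn_hasDerivAt hx).continuousAt.continuousWithinAt

lemma hfn_small {c : ℝ} (hc : 0 < c) (hc2 : c < 1 / 2) :
    ∃ z ∈ Ioo (0:ℝ) 1, 1 / 2 ≤ z ∧ hfn z < c := by
  set δ : ℝ := min (c ^ 2 / 16) (1 / 2) with hδdef
  have hδ0 : 0 < δ := lt_min (by positivity) (by norm_num)
  have hδ1 : δ ≤ 1 / 2 := min_le_right _ _
  have hδ2 : δ ≤ c ^ 2 / 16 := min_le_left _ _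
  set z : ℝ := 1 - δ with hzdef
  have hz : z ∈ Ioo (0:ℝ) 1 := ⟨by simp [hzdef]; linarith, by simp [hzdef]; linarith⟩
  have hzhalf : 1 / 2 ≤ z := by simp [hzdef]; linarith
  refine ⟨z, hz, hzhalf, ?_⟩
  set s : ℝ := Real.sqrt δ with hsdef
  have hs0 : 0 < s := Real.sqrt_pos.mpr hδ0
  have hs2 : s ^ 2 = δ := Real.sq_sqrt hδ0.le
  have hsle : s ≤ c / 4 := by
    have : δ ≤ (c / 4) ^ 2 := by nlinarith
    calc s ≤ Real.sqrt ((c / 4) ^ 2) := Real.sqrt_le_sqrt this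
      _ = c / 4 := Real.sqrt_sq (by positivity)
  -- bound on log : -log δ ≤ 2 / s
  have hlogs : Real.log s ≥ 1 - 1 / s := by
    have h := Real.log_le_sub_one_of_pos (show (0:ℝ) < 1 / s by positivity)
    rw [Real.log_div one_ne_zero hs0.ne'] at h
    simp at h
    rw [ge_iff_le, one_div]
    linarith
  have hlogδ : -Real.log δ ≤ 2 / s - 2 := by
    have : Real.log δ = 2 * Real.log s := by
      rw [← hs2]; rw [Real.log_pow]; push_cast; ring
    rw [this]
    have : 2 * (1 - 1 / s) ≤ 2 * Real.log s := by linarith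
    have hss : 2 / s = 2 * (1 / s) := by ring
    linarith [this]
  -- bound log(1+z) ≤ 1
  have hlog2 : Real.log (1 + z) ≤ 1 := by
    have h1 : Real.log (1 + z) ≤ (1 + z) - 1 := Real.log_le_sub_one_of_pos (by linarith [hz.1])
    linarith [hz.2]
  have hLf : Lf z ≤ 1 + (2 / s - 2) := by
    unfold Lf
    have : Real.log (1 - z) = Real.log δ := by rw [hzdef]; ring_nf
    rw [this]
    linarith
  -- hfn z = (1-z²) Lf z/(4z) ≤ (1-z) Lf z  since (1+z)/(4z) ≤ 1 for z ≥ 1/2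
  have hLpos : 0 < Lf z := lt_trans (by linarith [hz.1]) (v_pos hz)
  have h1z : 1 - z = δ := by rw [hzdef]; ring
  have hbound : hfn z ≤ δ * Lf z := by
    unfold hfn
    rw [div_le_iff₀ (by linarith [hz.1])]
    have : 1 - z ^ 2 = (1 - z) * (1 + z) := by ring
    rw [this, h1z]
    have h4 : 1 + z ≤ 4 * z := by linarith
    calc δ * (1 + z) * Lf z = (δ * Lf z) * (1 + z) := by ring
      _ ≤ (δ * Lf z) * (4 * z) := by
          apply mul_le_mul_of_nonneg_left h4 (mul_nonneg hδ0.le hLpos.le)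
      _ = δ * Lf z * (4 * z) := by ring
  have hfinal : δ * Lf z ≤ δ + 2 * s - 2 * δ := by
    have := mul_le_mul_of_nonneg_left hLf hδ0.le
    have hδs : δ * (2 / s) = 2 * s := by
      rw [← hs2]; field_simp
    nlinarith [this, hδs]
  have : δ + 2 * s ≤ c ^ 2 / 16 + c / 2 := by linarith
  have hc216 : c ^ 2 / 16 < c / 2 := by nlinarith
  linarith

lemma hfn_surj {c : ℝ} (hc : c ∈ Ioo (0:ℝ) (1/2)) : ∃ z ∈ Ioo (0:ℝ) 1, hfn z = c := by
  obtain ⟨z₂, hz₂, _, hz₂c⟩ := hfn_small hc.1 hc.2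
  set z₁ : ℝ := Real.sqrt ((1 - 2 * c) / 2) with hz₁def
  have h12c : 0 < (1 - 2 * c) / 2 := by linarith [hc.2]
  have hz₁0 : 0 < z₁ := Real.sqrt_pos.mpr h12c
  have hz₁sq : z₁ ^ 2 = (1 - 2 * c) / 2 := Real.sq_sqrt h12c.le
  have hz₁1 : z₁ < 1 := by nlinarith [hc.1, hz₁0]
  have hz₁ : z₁ ∈ Ioo (0:ℝ) 1 := ⟨hz₁0, hz₁1⟩
  have hz₁c : c < hfn z₁ := by
    have := hfn_gt hz₁
    have : (1 - z₁ ^ 2) / 2 = (1 + 2 * c) / 4 := by rw [hz₁sq]; ring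
    nlinarith [hfn_gt hz₁, hc.1]
  have hord : z₁ < z₂ := by
    rcases lt_trichotomy z₁ z₂ with h | h | h
    · exact h
    · exfalso; rw [h] at hz₁c; linarith
    · exfalso; have := hfn_anti hz₂ hz₁ h; linarith
  have hsub : Icc z₁ z₂ ⊆ Ioo (0:ℝ) 1 := fun x hx =>
    ⟨lt_of_lt_of_le hz₁0 hx.1, lt_of_le_of_lt hx.2 hz₂.2⟩
  have := intermediate_value_Icc' hord.le (hfn_continuousOn.mono hsub)
  have hmem : c ∈ Icc (hfn z₂) (hfn z₁) := ⟨hz₂c.le, hz₁c.le⟩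
  obtain ⟨z, hzmem, hzeq⟩ := this hmem
  exact ⟨z, hsub hzmem, hzeq⟩

lemma phif_large (K : ℝ) : ∃ z ∈ Ioo (0:ℝ) 1, K ≤ phif z := by
  set M : ℝ := max K 1 with hMdef
  have hM1 : 1 ≤ M := le_max_right _ _
  set z : ℝ := 1 - Real.exp (-(4 * M)) with hzdef
  have he1 : Real.exp (-(4 * M)) < 1 := Real.exp_lt_one_iff.mpr (by linarith)
  have he0 : 0 < Real.exp (-(4 * M)) := Real.exp_pos _
  have hz : z ∈ Ioo (0:ℝ) 1 := ⟨by simp [hzdef]; linarith, by simp [hzdef]; linarith⟩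
  refine ⟨z, hz, ?_⟩
  have hlog : Real.log (1 - z) = -(4 * M) := by
    rw [show (1:ℝ) - z = Real.exp (-(4 * M)) by rw [hzdef]; ring, Real.log_exp]
  have hL : 4 * M ≤ Lf z := by
    unfold Lf
    rw [hlog]
    have : 0 ≤ Real.log (1 + z) := Real.log_nonneg (by linarith [hz.1])
    linarith
  have hL0 : 0 < Lf z := by linarith
  have : Lf z / 4 ≤ phif z := by
    unfold phif
    apply div_le_div_of_nonneg_left hL0.le (by linarith [hz.1]) (by linarith [hz.2])
  have hK : K ≤ M := le_max_left _ _
  have : M ≤ Lf z / 4 := by linarith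
  linarith [div_le_div_of_nonneg_left hL0.le (show (0:ℝ) < 4*z by linarith [hz.1]) (show 4*z ≤ 4 by linarith [hz.2])]

lemma phif_small {ε : ℝ} (hε : 0 < ε) : ∃ z ∈ Ioo (0:ℝ) 1, phif z < 1 / 2 + ε := by
  set m : ℝ := min (1/2) (2 * ε / (1 + 2 * ε)) with hmdef
  have hm0 : 0 < m := lt_min (by norm_num) (by positivity)
  set z : ℝ := Real.sqrt m with hzdef
  have hz0 : 0 < z := Real.sqrt_pos.mpr hm0
  have hzsq : z ^ 2 = m := Real.sq_sqrt hm0.le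
  have hmhalf : m ≤ 1/2 := min_le_left _ _
  have hz1 : z < 1 := by nlinarith
  have hz : z ∈ Ioo (0:ℝ) 1 := ⟨hz0, hz1⟩
  refine ⟨z, hz, ?_⟩
  have hzm : z ^ 2 * (1 + 2 * ε) ≤ 2 * ε := by
    have := min_le_right (1/2 : ℝ) (2 * ε / (1 + 2 * ε))
    rw [hzsq]
    calc m * (1 + 2 * ε) ≤ (2 * ε / (1 + 2 * ε)) * (1 + 2 * ε) := by
          apply mul_le_mul_of_nonneg_right this (by linarith)
      _ = 2 * ε := by field_simp
  have h1 : 0 < 1 - z ^ 2 := by nlinarith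
  have key : 1 / (2 * (1 - z ^ 2)) ≤ 1 / 2 + ε := by
    rw [div_le_iff₀ (by linarith)]
    nlinarith
  linarith [phif_lt hz]

lemma Lf_def (z : ℝ) : Lf z = Real.log (1 + z) - Real.log (1 - z) := rfl
lemma phif_def (z : ℝ) : phif z = Lf z / (4 * z) := rfl

theorem betaH_existence (b : ℝ) (hb : 0 < b)
    (WH : ℝ → ℝ)
    (hWH : ∀ β' : ℝ, 1 / (2 * b ^ 2) < β' →
      WH β' ∈ Ioo 0 b ∧
      Real.exp (-(4 * b * β' * WH β')) = (b - WH β') / (b + WH β')) :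
    ∃ βH : ℝ → ℝ,
      (∀ β ∈ Ioo (0 : ℝ) (1 / (2 * b ^ 2)),
        βH β ∈ Ioi (1 / (2 * b ^ 2)) ∧
        β * b ^ 2 = βH β * (b ^ 2 - (WH (βH β)) ^ 2) ∧
        (∀ β' ∈ Ioi (1 / (2 * b ^ 2)),
          β * b ^ 2 = β' * (b ^ 2 - (WH β') ^ 2) → β' = βH β)) ∧
      StrictAntiOn βH (Ioo (0 : ℝ) (1 / (2 * b ^ 2))) ∧
      Tendsto βH (nhdsWithin 0 (Ioi 0)) atTop ∧
      Tendsto βH (nhdsWithin (1 / (2 * b ^ 2)) (Iio (1 / (2 * b ^ 2))))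
        (nhds (1 / (2 * b ^ 2))) := by
  have hb2 : (0:ℝ) < b ^ 2 := by positivity
  have hhalf : (0:ℝ) < 1 / (2 * b ^ 2) := by positivity
  -- translate the WH hypothesis into normalized coordinates
  have hWkey : ∀ β' : ℝ, 1 / (2 * b ^ 2) < β' →
      WH β' / b ∈ Ioo (0:ℝ) 1 ∧ phif (WH β' / b) = β' * b ^ 2 := by
    intro β' hβ'
    obtain ⟨⟨hW0, hWb⟩, heq⟩ := hWH β' hβ'
    set W := WH β' with hWdef
    set z := W / b with hzdef
    have hz : z ∈ Ioo (0:ℝ) 1 := ⟨by positivity, (div_lt_one hb).mpr hWb⟩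
    have hbW1 : (0:ℝ) < b - W := by linarith
    have hbW2 : (0:ℝ) < b + W := by linarith
    have hlog : Real.log (b - W) - Real.log (b + W) = -(4 * b * β' * W) := by
      rw [← Real.log_div hbW1.ne' hbW2.ne', ← heq, Real.log_exp]
    have h1z : 1 + z = (b + W) / b := by rw [hzdef]; field_simp
    have h2z : 1 - z = (b - W) / b := by rw [hzdef]; field_simp
    have hLz : Lf z = 4 * b * β' * W := by
      rw [Lf_def, h1z, h2z, Real.log_div hbW2.ne' hb.ne', Real.log_div hbW1.ne' hb.ne']
      linarith
    refine ⟨hz, ?_⟩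
    rw [phif_def, hLz, hzdef]
    field_simp
  -- choose the inverse of hfn
  have hexists : ∀ β : ℝ, ∃ z : ℝ,
      β ∈ Ioo (0:ℝ) (1 / (2 * b ^ 2)) → z ∈ Ioo (0:ℝ) 1 ∧ hfn z = β * b ^ 2 := by
    intro β
    by_cases hβ : β ∈ Ioo (0:ℝ) (1 / (2 * b ^ 2))
    · have hc : β * b ^ 2 ∈ Ioo (0:ℝ) (1/2) := by
        constructor
        · exact mul_pos hβ.1 hb2
        · have := mul_lt_mul_of_pos_right hβ.2 hb2
          have he : 1 / (2 * b ^ 2) * b ^ 2 = 1 / 2 := by field_simp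
          linarith
      obtain ⟨z, hz, hze⟩ := hfn_surj hc
      exact ⟨z, fun _ => ⟨hz, hze⟩⟩
    · exact ⟨0, fun h => absurd h hβ⟩
  choose Z hZ using hexists
  set βH : ℝ → ℝ := fun β => phif (Z β) / b ^ 2 with hβHdef
  -- basic facts for β in the domain
  have hmem : ∀ β ∈ Ioo (0:ℝ) (1 / (2 * b ^ 2)), βH β ∈ Ioi (1 / (2 * b ^ 2)) := by
    intro β hβ
    have h := phif_gt_half (hZ β hβ).1
    rw [mem_Ioi, hβHdef]
    rw [show (1:ℝ) / (2 * b ^ 2) = (1 / 2) / b ^ 2 by ring]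
    exact (div_lt_div_iff_of_pos_right hb2).mpr h
  have hβb2 : ∀ β : ℝ, βH β * b ^ 2 = phif (Z β) := by
    intro β; rw [hβHdef]; field_simp
  have hid : ∀ β ∈ Ioo (0:ℝ) (1 / (2 * b ^ 2)), WH (βH β) = b * Z β := by
    intro β hβ
    obtain ⟨hz', hφ'⟩ := hWkey (βH β) (hmem β hβ)
    rw [hβb2] at hφ'
    have heq := phif_mono.injOn hz' (hZ β hβ).1 hφ'
    rw [← heq]; field_simp
  have heqn : ∀ β ∈ Ioo (0:ℝ) (1 / (2 * b ^ 2)),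
      β * b ^ 2 = βH β * (b ^ 2 - WH (βH β) ^ 2) := by
    intro β hβ
    have hW := hid β hβ
    rw [hW, hβHdef]
    have expand : phif (Z β) / b ^ 2 * (b ^ 2 - (b * Z β) ^ 2)
        = (1 - (Z β) ^ 2) * phif (Z β) := by field_simp
    rw [expand, ← hfn_eq]
    exact ((hZ β hβ).2).symm
  have huniq : ∀ β ∈ Ioo (0:ℝ) (1 / (2 * b ^ 2)), ∀ β' ∈ Ioi (1 / (2 * b ^ 2)),
      β * b ^ 2 = β' * (b ^ 2 - WH β' ^ 2) → β' = βH β := by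
    intro β hβ β' hβ' heq
    obtain ⟨hz', hφ'⟩ := hWkey β' hβ'
    have hval : β' * (b ^ 2 - WH β' ^ 2) = hfn (WH β' / b) := by
      rw [hfn_eq, hφ']
      field_simp
    have hK : hfn (WH β' / b) = hfn (Z β) := by
      rw [← hval, ← heq, (hZ β hβ).2]
    have hzeq := hfn_anti.injOn hz' (hZ β hβ).1 hK
    have : β' * b ^ 2 = βH β * b ^ 2 := by
      rw [hβb2, ← hzeq, hφ']
    exact mul_right_cancel₀ hb2.ne' this
  have hanti : StrictAntiOn βH (Ioo (0:ℝ) (1 / (2 * b ^ 2))) := by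
    intro β₁ h₁ β₂ h₂ hlt
    have e₁ := (hZ β₁ h₁).2
    have e₂ := (hZ β₂ h₂).2
    have hlt2 : hfn (Z β₁) < hfn (Z β₂) := by
      rw [e₁, e₂]; exact mul_lt_mul_of_pos_right hlt hb2
    have hzlt : Z β₂ < Z β₁ := by
      rcases lt_trichotomy (Z β₂) (Z β₁) with h | h | h
      · exact h
      · exfalso; rw [h] at hlt2; exact lt_irrefl _ hlt2
      · exfalso
        have := hfn_anti (hZ β₁ h₁).1 (hZ β₂ h₂).1 h
        linarith
    exact (div_lt_div_iff_of_pos_right hb2).mpr (phif_mono (hZ β₂ h₂).1 (hZ β₁ h₁).1 hzlt)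
  have htop : Tendsto βH (nhdsWithin 0 (Ioi 0)) atTop := by
    rw [tendsto_atTop]
    intro M
    obtain ⟨z₀, hz₀, hz₀M⟩ := phif_large (M * b ^ 2)
    have hh0 : 0 < hfn z₀ := by nlinarith [hfn_gt hz₀, hz₀.1, hz₀.2]
    set δ : ℝ := min (hfn z₀ / b ^ 2) (1 / (2 * b ^ 2)) with hδdef
    have hδ0 : 0 < δ := lt_min (by positivity) hhalf
    filter_upwards [Ioo_mem_nhdsGT_of_mem
      (show (0:ℝ) ∈ Ico 0 δ from ⟨le_refl _, hδ0⟩)] with β hβ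
    have hβdom : β ∈ Ioo (0:ℝ) (1 / (2 * b ^ 2)) :=
      ⟨hβ.1, lt_of_lt_of_le hβ.2 (min_le_right _ _)⟩
    have h1 : hfn (Z β) < hfn z₀ := by
      rw [(hZ β hβdom).2]
      have h2 : β < hfn z₀ / b ^ 2 := lt_of_lt_of_le hβ.2 (min_le_left _ _)
      exact (lt_div_iff₀ hb2).mp h2
    have hzgt : z₀ < Z β := by
      rcases lt_trichotomy z₀ (Z β) with h | h | h
      · exact h
      · exfalso; rw [h] at h1; exact lt_irrefl _ h1
      · exfalso
        have := hfn_anti (hZ β hβdom).1 hz₀ h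
        linarith
    have hφ : M * b ^ 2 ≤ phif (Z β) :=
      le_of_lt (lt_of_le_of_lt hz₀M (phif_mono hz₀ (hZ β hβdom).1 hzgt))
    rw [hβHdef]
    exact (le_div_iff₀ hb2).mpr hφ
  have hbot : Tendsto βH (nhdsWithin (1 / (2 * b ^ 2)) (Iio (1 / (2 * b ^ 2))))
      (nhds (1 / (2 * b ^ 2))) := by
    rw [tendsto_order]
    constructor
    · intro a ha
      filter_upwards [Ioo_mem_nhdsLT_of_mem
        (show (1:ℝ) / (2 * b ^ 2) ∈ Ioc 0 (1 / (2 * b ^ 2)) from ⟨hhalf, le_refl _⟩)] with β hβ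
      exact lt_trans ha (hmem β hβ)
    · intro a ha
      have hε : 0 < (a - 1 / (2 * b ^ 2)) * b ^ 2 := by
        have : 0 < a - 1 / (2 * b ^ 2) := by linarith
        positivity
      obtain ⟨z₀, hz₀, hz₀s⟩ := phif_small hε
      set β₀ : ℝ := hfn z₀ / b ^ 2 with hβ₀def
      have hh0 : 0 < hfn z₀ := by nlinarith [hfn_gt hz₀, hz₀.1, hz₀.2]
      have hβ₀pos : 0 < β₀ := by positivity
      have hβ₀lt : β₀ < 1 / (2 * b ^ 2) := by
        rw [hβ₀def, div_lt_div_iff₀ hb2 (by positivity : (0:ℝ) < 2 * b ^ 2)]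
        nlinarith [hfn_lt_half hz₀]
      filter_upwards [Ioo_mem_nhdsLT_of_mem
        (show (1:ℝ) / (2 * b ^ 2) ∈ Ioc β₀ (1 / (2 * b ^ 2)) from ⟨hβ₀lt, le_refl _⟩)] with β hβ
      have hβdom : β ∈ Ioo (0:ℝ) (1 / (2 * b ^ 2)) := ⟨lt_trans hβ₀pos hβ.1, hβ.2⟩
      have h1 : hfn z₀ < hfn (Z β) := by
        rw [(hZ β hβdom).2]
        have h2 : β₀ < β := hβ.1
        rw [hβ₀def, div_lt_iff₀ hb2] at h2
        linarith
      have hzlt : Z β < z₀ := by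
        rcases lt_trichotomy (Z β) z₀ with h | h | h
        · exact h
        · exfalso; rw [h] at h1; exact lt_irrefl _ h1
        · exfalso
          have := hfn_anti hz₀ (hZ β hβdom).1 h
          linarith
      have hφ : phif (Z β) < 1 / 2 + (a - 1 / (2 * b ^ 2)) * b ^ 2 :=
        lt_trans (phif_mono (hZ β hβdom).1 hz₀ hzlt) hz₀s
      rw [hβHdef]
      rw [div_lt_iff₀ hb2]
      have he2 : a * b ^ 2 = 1 / 2 + (a - 1 / (2 * b ^ 2)) * b ^ 2 := by
        field_simp; ring
      linarith
  exact ⟨βH, fun β hβ => ⟨hmem β hβ, heqn β hβ, huniq β hβ⟩, hanti, htop, hbot⟩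
end
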